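/- Assume k is algebraically closed and let B be an associative unital k-algebra. Let M ⊆ B* be the k-span of all matrix coefficients β_V(x), where V ranges over all finite-dimensional left B-modules and x ∈ V ⊗_k V*. Then every finite-dimensional left B-module is semisimple if and only if M has a Peter–Weyl decomposition, meaning: (i) M equals the sum of the subspaces β_S(S ⊗_k S*) taken over all finite-dimensional simple left B-modules S, and (ii) for every finite family of pairwise non-isomorphic finite-dimensional simple left B-modules, the corresponding subspaces β_S(S ⊗_k S*) are linearly independent (their sum in B* is direct). -/

import Mathlib

/-!
Matrix coefficients.  `k` is a field, `A` an associative unital `k`-algebra, and `V` a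
left `A`-module which is also a `k`-vector space compatibly.  The matrix coefficient map
`β_V : V ⊗[k] V* → A*` is the `k`-linear map determined by `β_V (v ⊗ f) a = f (a • v)`.
-/

open TensorProduct

/-- The matrix coefficient map `β_V : V ⊗[k] V* → A*`, `β_V (v ⊗ f) a = f (a • v)`. -/
noncomputable def matrixCoeff (k A V : Type*) [Field k] [Ring A] [Algebra k A]
    [AddCommGroup V] [Module k V] [Module A V] [IsScalarTower k A V] :
    V ⊗[k] Module.Dual k V →ₗ[k] Module.Dual k A :=
  TensorProduct.lift
  { toFun := fun v =>
      { toFun := fun f =>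
          { toFun := fun a => f (a • v)
            map_add' := fun a b => by simp [add_smul]
            map_smul' := fun c a => by simp [smul_assoc] }
        map_add' := fun f g => rfl
        map_smul' := fun c f => rfl }
    map_add' := fun v w => by
      ext f a
      simp [smul_add]
    map_smul' := fun c v => by
      ext f a
      show f (a • c • v) = c • f (a • v)
      rw [smul_comm a c v, map_smul] }


universe u

/-- A bundled finite-dimensional left `B`-module (with compatible `k`-structure). -/
structure FDMod (k B : Type u) [Field k] [Ring B] [Algebra k B] : Type (u + 1) where
  V : Type u
  [addCommGroup : AddCommGroup V]
  [modK : Module k V]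
  [modB : Module B V]
  [tower : IsScalarTower k B V]
  [fd : FiniteDimensional k V]

attribute [instance] FDMod.addCommGroup FDMod.modK FDMod.modB FDMod.tower FDMod.fd

section Aux

variable (k B : Type u) [Field k] [Ring B] [Algebra k B]
variable (V : Type u) [AddCommGroup V] [Module k V] [Module B V] [IsScalarTower k B V]

lemma bsmul_csmul (b : B) (c : k) (v : V) : b • c • v = c • b • v := by
  rw [← algebraMap_smul B c v, ← mul_smul, ← Algebra.commutes, mul_smul, algebraMap_smul]

@[simp] lemma matrixCoeff_tmul (v : V) (f : Module.Dual k V) (b : B) :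
    matrixCoeff k B V (v ⊗ₜ f) b = f (b • v) := rfl

/-- the action map as a `k`-linear map -/
noncomputable def rho : B →ₗ[k] (V →ₗ[k] V) where
  toFun b :=
    { toFun := fun v => b • v
      map_add' := fun v w => smul_add b v w
      map_smul' := fun c v => bsmul_csmul k B V b c v }
  map_add' b b' := by ext v; exact add_smul b b' v
  map_smul' c b := by ext v; exact smul_assoc c b v

@[simp] lemma rho_apply (b : B) (v : V) : rho k B V b v = b • v := rfl

variable {k B V}

lemma matrixCoeff_eq_of_smul_eq (t : V ⊗[k] Module.Dual k V) {b b' : B}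
    (h : ∀ v : V, b • v = b' • v) :
    matrixCoeff k B V t b = matrixCoeff k B V t b' := by
  induction t using TensorProduct.induction_on with
  | zero => simp
  | tmul v f => simp [h]
  | add x y hx hy => simp only [map_add, LinearMap.add_apply, hx, hy]

lemma matrixCoeff_eq_zero_of_smul_eq_zero (t : V ⊗[k] Module.Dual k V) {b : B}
    (h : ∀ v : V, b • v = 0) :
    matrixCoeff k B V t b = 0 := by
  induction t using TensorProduct.induction_on with
  | zero => simp
  | tmul v f => simp [h]
  | add x y hx hy => simp only [map_add, LinearMap.add_apply, hx, hy, add_zero]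

end Aux

section Aux2

variable {k B : Type u} [Field k] [Ring B] [Algebra k B]
variable {V : Type u} [AddCommGroup V] [Module k V] [Module B V] [IsScalarTower k B V]

lemma mem_range_matrixCoeff_of_vanishes [FiniteDimensional k V] {F : Module.Dual k B}
    (hF : ∀ b : B, (∀ v : V, b • v = 0) → F b = 0) :
    F ∈ LinearMap.range (matrixCoeff k B V) := by
  classical
  set ρ := rho k B V with hρ
  have hker : LinearMap.ker ρ ≤ LinearMap.ker F := by
    intro b hb
    refine hF b fun v => ?_
    have : ρ b = 0 := LinearMap.mem_ker.mp hb
    simpa [hρ] using congrFun (congrArg DFunLike.coe this) v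
  let H0 : (B ⧸ LinearMap.ker ρ) →ₗ[k] k := (LinearMap.ker ρ).liftQ F hker
  let e := ρ.quotKerEquivRange
  let H : LinearMap.range ρ →ₗ[k] k := H0 ∘ₗ (e.symm : LinearMap.range ρ →ₗ[k] _)
  obtain ⟨G, hG⟩ := Subspace.dualRestrict_surjective (W := LinearMap.range ρ) H
  have key : ∀ b : B, G (ρ b) = F b := by
    intro b
    have h1 : (LinearMap.range ρ).dualRestrict G ⟨ρ b, LinearMap.mem_range_self ρ b⟩
        = H ⟨ρ b, LinearMap.mem_range_self ρ b⟩ := by rw [hG]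
    have h2 : e (Submodule.Quotient.mk b) = ⟨ρ b, LinearMap.mem_range_self ρ b⟩ :=
      Subtype.ext (ρ.quotKerEquivRange_apply_mk b)
    have h3 : H ⟨ρ b, LinearMap.mem_range_self ρ b⟩ = F b := by
      show H0 (e.symm _) = F b
      rw [← h2, LinearEquiv.symm_apply_apply]
      rfl
    simpa [Submodule.dualRestrict_apply] using h1.trans h3
  let bV := Module.finBasis k V
  let Θ : Fin (Module.finrank k V) → (V →ₗ[k] (V →ₗ[k] V)) := fun l =>
    { toFun := fun v => (bV.coord l).smulRight v
      map_add' := fun v w => by ext u; simp [smul_add]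
      map_smul' := fun c v => by
        ext u
        simp only [LinearMap.smulRight_apply, LinearMap.smul_apply, RingHom.id_apply]
        rw [smul_comm] }
  refine ⟨∑ l, bV l ⊗ₜ[k] (G ∘ₗ Θ l), ?_⟩
  ext b
  have hsum : (∑ l, (bV.coord l).smulRight (b • bV l)) = ρ b := by
    ext w
    simp only [LinearMap.coe_sum, Finset.sum_apply, LinearMap.smulRight_apply,
      Module.Basis.coord_apply, rho_apply]
    calc ∑ l, bV.repr w l • b • bV l = ∑ l, b • (bV.repr w l • bV l) := by
          refine Finset.sum_congr rfl fun l _ => ?_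
          rw [bsmul_csmul]
      _ = b • ∑ l, bV.repr w l • bV l := (Finset.smul_sum).symm
      _ = b • w := by rw [Module.Basis.sum_repr]
  calc matrixCoeff k B V (∑ l, bV l ⊗ₜ[k] (G ∘ₗ Θ l)) b
      = ∑ l, G ((bV.coord l).smulRight (b • bV l)) := by
        rw [map_sum]
        simp only [LinearMap.sum_apply, matrixCoeff_tmul, LinearMap.comp_apply]
        rfl
    _ = G (∑ l, (bV.coord l).smulRight (b • bV l)) := (map_sum G _ _).symm
    _ = F b := by rw [hsum]; exact key b

end Aux2

section Aux3

variable {k B : Type u} [Field k] [Ring B] [Algebra k B]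
variable {V : Type u} [AddCommGroup V] [Module k V] [Module B V] [IsScalarTower k B V]
variable {W : Type u} [AddCommGroup W] [Module k W] [Module B W] [IsScalarTower k B W]

lemma schur_zero [IsSimpleModule B V] [IsSimpleModule B W]
    (h : IsEmpty (V ≃ₗ[B] W)) (f : V →ₗ[B] W) : f = 0 := by
  rcases f.bijective_or_eq_zero with hb | h0
  · exact (h.false (LinearEquiv.ofBijective f hb)).elim
  · exact h0

lemma schur_scalar [IsAlgClosed k] [IsSimpleModule B V] [FiniteDimensional k V]
    (f : V →ₗ[B] V) : ∃ c : k, ∀ v, f v = c • v := by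
  haveI := IsSimpleModule.nontrivial B V
  obtain ⟨c, hc⟩ := Module.End.exists_eigenvalue (f.restrictScalars k : Module.End k V)
  obtain ⟨v₀, hv₀⟩ := hc.exists_hasEigenvector
  refine ⟨c, ?_⟩
  let g : V →ₗ[B] V :=
    { toFun := fun v => f v - c • v
      map_add' := fun v w => by simp [smul_add]; abel
      map_smul' := fun b v => by
        simp only [map_smul, RingHom.id_apply, smul_sub]
        rw [bsmul_csmul k B V] }
  have hker : LinearMap.ker g ≠ ⊥ := by
    intro hbot
    have hv : v₀ ∈ LinearMap.ker g := by
      simp only [LinearMap.mem_ker, LinearMap.coe_mk, AddHom.coe_mk, g]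
      have := hv₀.apply_eq_smul
      simpa [sub_eq_zero] using this
    rw [hbot, Submodule.mem_bot] at hv
    exact hv₀.2 hv
  have htop : LinearMap.ker g = ⊤ := (eq_bot_or_eq_top _).resolve_left hker
  intro v
  have hv : v ∈ LinearMap.ker g := htop ▸ Submodule.mem_top
  have := LinearMap.mem_ker.mp hv
  simpa [g, sub_eq_zero] using this

lemma piSemisimple {ι : Type*} [Finite ι] (M : ι → Type u) [∀ i, AddCommGroup (M i)]
    [∀ i, Module B (M i)] [∀ i, IsSemisimpleModule B (M i)] :
    IsSemisimpleModule B (∀ i, M i) := by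
  classical
  cases nonempty_fintype ι
  refine isSemisimpleModule_of_isSemisimpleModule_submodule'
    (p := fun i => LinearMap.range (LinearMap.single B M i)) (fun i => ?_)
    (LinearMap.iSup_range_single B M)
  exact IsSemisimpleModule.congr
    (LinearEquiv.ofInjective (LinearMap.single B M i) (Pi.single_injective (M := M) i)).symm
lemma matrixCoeff_subtype (U : Submodule B V) (u : U) (f : Module.Dual k V) :
    matrixCoeff k B V (↑u ⊗ₜ f) =
      matrixCoeff k B U (u ⊗ₜ (f ∘ₗ (U.subtype.restrictScalars k))) := by
  ext b
  show f (b • ↑u) = f ↑(b • u)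
  rw [Submodule.coe_smul]

lemma range_matrixCoeff_le_of_equiv (φ : V ≃ₗ[B] W) :
    LinearMap.range (matrixCoeff k B V) ≤ LinearMap.range (matrixCoeff k B W) := by
  rintro x ⟨t, rfl⟩
  induction t using TensorProduct.induction_on with
  | zero => simp only [map_zero]; exact Submodule.zero_mem _
  | add x y hx hy => rw [map_add]; exact Submodule.add_mem _ hx hy
  | tmul v f =>
    refine ⟨φ v ⊗ₜ (f ∘ₗ (φ.symm.toLinearMap.restrictScalars k)), ?_⟩
    ext b
    show f (φ.symm (b • φ v)) = f (b • v)
    rw [map_smul, LinearEquiv.symm_apply_apply]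

lemma smul_eq_zero_of_equiv (φ : V ≃ₗ[B] W) (b : B) (h : ∀ v : V, b • v = 0) :
    ∀ w : W, b • w = 0 := by
  intro w
  have : b • φ.symm w = 0 := h _
  have := congrArg φ this
  rwa [map_smul, LinearEquiv.apply_symm_apply, map_zero] at this

lemma density [IsAlgClosed k] {n : ℕ} (S : Fin n → FDMod k B)
    (hsimp : ∀ i, IsSimpleModule B (S i).V)
    (hiso : ∀ i j, i ≠ j → IsEmpty ((S i).V ≃ₗ[B] (S j).V))
    (e : ∀ i, (S i).V →ₗ[k] (S i).V) :
    ∃ b : B, ∀ (i : Fin n) (v : (S i).V), b • v = e i v := by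
  classical
  haveI hss : ∀ i, IsSemisimpleModule B (S i).V := fun i => by
    haveI := hsimp i; infer_instance
  set M : Type u := ∀ i, (S i).V with hM
  haveI : IsSemisimpleModule B M := piSemisimple (fun i => (S i).V)
  set r := Module.finrank k M with hr
  let bV : Module.Basis (Fin r) k M := Module.finBasis k M
  set P : Type u := Fin r → M with hP
  haveI : IsSemisimpleModule B P := piSemisimple (fun _ : Fin r => M)
  let mv : P := ⇑bV
  set N : Submodule B P := Submodule.span B {mv} with hN
  obtain ⟨Q, hQ⟩ := exists_isCompl N
  let π : P →ₗ[B] N := N.linearProjOfIsCompl Q hQ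
  let ψ : P →ₗ[B] P := N.subtype ∘ₗ π
  have hψmem : ∀ x : P, ψ x ∈ N := fun x => (π x).2
  have hψN : ∀ x ∈ N, ψ x = x := by
    intro x hx
    show ↑(π x) = x
    have : π ↑(⟨x, hx⟩ : N) = ⟨x, hx⟩ := Submodule.linearProjOfIsCompl_apply_left hQ ⟨x, hx⟩
    rw [this]
  -- injections and projections
  let inj : ∀ (a : Fin r) (i : Fin n), (S i).V →ₗ[B] P := fun a i =>
    (LinearMap.single B (fun _ : Fin r => M) a) ∘ₗ (LinearMap.single B (fun i => (S i).V) i)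
  let prj : ∀ (a : Fin r) (i : Fin n), P →ₗ[B] (S i).V := fun a i =>
    (LinearMap.proj i) ∘ₗ (LinearMap.proj (R := B) (φ := fun _ : Fin r => M) a)
  let g : ∀ (a : Fin r) (i : Fin n) (a' : Fin r) (j : Fin n), (S j).V →ₗ[B] (S i).V :=
    fun a i a' j => (prj a i) ∘ₗ ψ ∘ₗ (inj a' j)
  have hg0 : ∀ a i a' j (h : j ≠ i), g a i a' j = 0 := fun a i a' j h => by
    haveI := hsimp i; haveI := hsimp j
    exact schur_zero (hiso j i h) _
  have hgc : ∀ a i a', ∃ c : k, ∀ s, g a i a' i s = c • s := fun a i a' => by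
    haveI := hsimp i
    exact schur_scalar _
  -- expansion
  have hexpand : ∀ x : P, x = ∑ a : Fin r, ∑ j : Fin n, inj a j (x a j) := by
    intro x
    have h1 : ∀ a : Fin r, x a = ∑ j, Pi.single j (x a j) :=
      fun a => (Finset.univ_sum_single (x a)).symm
    calc x = ∑ a, Pi.single a (x a) := (Finset.univ_sum_single x).symm
      _ = ∑ a, Pi.single a (∑ j, Pi.single j (x a j)) := by
          refine Finset.sum_congr rfl fun a _ => ?_; rw [← h1]
      _ = ∑ a : Fin r, ∑ j : Fin n, inj a j (x a j) := by
          refine Finset.sum_congr rfl fun a _ => ?_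
          rw [show (Pi.single a (∑ j, Pi.single j (x a j)) : P)
              = (LinearMap.single B (fun _ : Fin r => M) a) (∑ j, Pi.single j (x a j)) from rfl,
            map_sum]
          rfl
  have hexp : ∀ (x : P) (a : Fin r) (i : Fin n),
      ψ x a i = ∑ a' : Fin r, ∑ j : Fin n, g a i a' j (x a' j) := by
    intro x a i
    have h0 : ψ x = ∑ a' : Fin r, ∑ j : Fin n, ψ (inj a' j (x a' j)) := by
      conv_lhs => rw [hexpand x]
      rw [map_sum]
      exact Finset.sum_congr rfl fun a' _ => map_sum ψ _ _
    rw [h0]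
    rw [Finset.sum_apply a Finset.univ, Finset.sum_apply i Finset.univ]
    refine Finset.sum_congr rfl fun a' _ => ?_
    rw [Finset.sum_apply a Finset.univ, Finset.sum_apply i Finset.univ]
    rfl
  -- the k-linear endomorphisms
  let FM : M →ₗ[k] M := LinearMap.pi (fun i => (e i) ∘ₗ LinearMap.proj i)
  let FP : P →ₗ[k] P := LinearMap.pi (fun a => FM ∘ₗ LinearMap.proj a)
  have hFP : ∀ (x : P) (a : Fin r) (i : Fin n), FP x a i = e i (x a i) := fun x a i => rfl
  have hcomm : ∀ x : P, ψ (FP x) = FP (ψ x) := by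
    intro x
    funext a i
    rw [hFP, hexp, hexp]
    rw [map_sum]
    refine Finset.sum_congr rfl fun a' _ => ?_
    rw [map_sum]
    refine Finset.sum_congr rfl fun j _ => ?_
    rw [hFP]
    by_cases hji : j = i
    · subst hji
      obtain ⟨c, hc⟩ := hgc a j a'
      rw [hc, hc, map_smul]
    · rw [hg0 a i a' j hji]
      simp
  -- conclude
  have hmvN : mv ∈ N := Submodule.mem_span_singleton_self mv
  have hFPmv : FP mv ∈ N := by
    have h1 : ψ (FP mv) = FP mv := by rw [hcomm, hψN mv hmvN]
    rw [← h1]; exact hψmem _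
  obtain ⟨b, hb⟩ := Submodule.mem_span_singleton.mp hFPmv
  refine ⟨b, ?_⟩
  have hbasis : ∀ a : Fin r, b • (bV a : M) = FM (bV a) := by
    intro a
    have := congrFun hb a
    exact this
  have hall : ∀ m : M, b • m = FM m := by
    have heq : (LinearMap.pi (fun i => (LinearMap.proj i).comp
        (0 : M →ₗ[k] M)) : M →ₗ[k] M) = 0 := by ext; simp
    -- introduce rho-like map
    let ρb : M →ₗ[k] M :=
      { toFun := fun m => b • m
        map_add' := fun m m' => smul_add b m m'
        map_smul' := fun c m => bsmul_csmul k B M b c m }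
    have : ρb = FM := Module.Basis.ext bV hbasis
    intro m
    exact congrFun (congrArg DFunLike.coe this) m
  intro i v
  have h3 := hall (Pi.single i v)
  have h4 := congrFun h3 i
  have h5 : FM (Pi.single i v) i = e i v := by
    show e i ((Pi.single i v : M) i) = e i v
    rw [Pi.single_eq_same]
  have h6 : (b • (Pi.single i v : M)) i = b • v := by
    rw [Pi.smul_apply, Pi.single_eq_same]
  calc b • v = (b • (Pi.single i v : M)) i := h6.symm
    _ = FM (Pi.single i v) i := h4
    _ = e i v := h5

end Aux3

lemma dedupe {α : Type*} (r : α → α → Prop) (hrefl : ∀ a, r a a)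
    (hsymm : ∀ {a b}, r a b → r b a) (htrans : ∀ {a b c}, r a b → r b c → r a c)
    (s : Finset α) :
    ∃ t ⊆ s, (∀ a ∈ s, ∃ b ∈ t, r a b) ∧ ∀ a ∈ t, ∀ b ∈ t, a ≠ b → ¬ r a b := by
  classical
  induction s using Finset.strongInduction with
  | _ s ih =>
    by_cases h : ∃ a ∈ s, ∃ b ∈ s, a ≠ b ∧ r a b
    · obtain ⟨a, ha, b, hb, hab, hr⟩ := h
      obtain ⟨t, hts, hcov, hpair⟩ := ih (s.erase a) (Finset.erase_ssubset ha)
      refine ⟨t, hts.trans (Finset.erase_subset a s), ?_, hpair⟩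
      intro c hc
      by_cases hca : c = a
      · subst hca
        obtain ⟨d, hd, hrd⟩ := hcov b (Finset.mem_erase.mpr ⟨fun hba => hab hba.symm, hb⟩)
        exact ⟨d, hd, htrans hr hrd⟩
      · exact hcov c (Finset.mem_erase.mpr ⟨hca, hc⟩)
    · push_neg at h
      exact ⟨s, subset_rfl, fun a ha => ⟨a, ha, hrefl a⟩, fun a ha b hb hab => h a ha b hb hab⟩

section Main

variable {k B : Type u} [Field k] [Ring B] [Algebra k B]

noncomputable def FDMod.ofSubmodule (W : FDMod k B) (U : Submodule B W.V) : FDMod k B :=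
  letI : FiniteDimensional k U :=
    FiniteDimensional.of_injective (U.subtype.restrictScalars k) U.injective_subtype
  { V := U }

end Main


/-- let `M ⊆ B*` be the span of all matrix coefficients of finite-dimensional left
`B`-modules.  Every finite-dimensional left `B`-module is semisimple if and only if `M` has a
Peter–Weyl decomposition: (i) `M` is the sum of the subspaces `β_S (S ⊗ S*)` over all
finite-dimensional simple left `B`-modules `S`, and (ii) for pairwise non-isomorphic
finite-dimensional simple modules these subspaces are linearly independent. -/
theorem peterWeyl (k B : Type u) [Field k] [IsAlgClosed k] [Ring B] [Algebra k B] :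
    (∀ (V : Type u) [AddCommGroup V] [Module k V] [Module B V] [IsScalarTower k B V]
        [FiniteDimensional k V], IsSemisimpleModule B V) ↔
      ((⨆ W : FDMod k B, LinearMap.range (matrixCoeff k B W.V)) =
          (⨆ W : FDMod k B, ⨆ _ : IsSimpleModule B W.V,
            LinearMap.range (matrixCoeff k B W.V)) ∧
        ∀ (n : ℕ) (S : Fin n → FDMod k B), (∀ i, IsSimpleModule B (S i).V) →
          (∀ i j, i ≠ j → IsEmpty ((S i).V ≃ₗ[B] (S j).V)) →
          ∀ x : Fin n → Module.Dual k B,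
            (∀ i, x i ∈ LinearMap.range (matrixCoeff k B (S i).V)) →
            ∑ i, x i = 0 → ∀ i, x i = 0) := by
  classical
  constructor
  · intro h
    constructor
    · -- (i)
      refine le_antisymm ?_ (iSup_mono fun W => iSup_le fun _ => le_rfl)
      refine iSup_le fun W => ?_
      haveI := h W.V
      rintro x ⟨t, rfl⟩
      induction t using TensorProduct.induction_on with
      | zero => simp only [map_zero]; exact Submodule.zero_mem _
      | add x y hx hy => rw [map_add]; exact Submodule.add_mem _ hx hy
      | tmul v f =>
        have hv : v ∈ (⨆ m : {m : Submodule B W.V | IsSimpleModule B m}, (m : Submodule B W.V)) := by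
          have hst := IsSemisimpleModule.sSup_simples_eq_top B W.V
          rw [sSup_eq_iSup'] at hst
          rw [hst]
          trivial
        refine Submodule.iSup_induction
          (motive := fun u => (matrixCoeff k B W.V) (u ⊗ₜ[k] f) ∈
            ⨆ W' : FDMod k B, ⨆ _ : IsSimpleModule B W'.V,
              LinearMap.range (matrixCoeff k B W'.V))
          (fun m : {m : Submodule B W.V | IsSimpleModule B m} => (m : Submodule B W.V))
          hv (fun U u hu => ?_) ?_ (fun u u' hu hu' => ?_)
        · beta_reduce
          rw [show u = ↑(⟨u, hu⟩ : U.1) from rfl, matrixCoeff_subtype U.1 ⟨u, hu⟩ f]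
          haveI : FiniteDimensional k (U : Submodule B W.V) :=
            FiniteDimensional.of_injective ((U : Submodule B W.V).subtype.restrictScalars k)
              (U : Submodule B W.V).injective_subtype
          refine Submodule.mem_iSup_of_mem (FDMod.ofSubmodule W U) ?_
          refine Submodule.mem_iSup_of_mem U.2 ?_
          exact ⟨_, rfl⟩
        · beta_reduce
          rw [show ((0 : W.V) ⊗ₜ[k] f : W.V ⊗[k] Module.Dual k W.V) = 0 from zero_tmul _ f,
            map_zero]
          exact Submodule.zero_mem _
        · beta_reduce at hu hu' ⊢
          rw [show ((u + u') ⊗ₜ[k] f : W.V ⊗[k] Module.Dual k W.V) = u ⊗ₜ f + u' ⊗ₜ f from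
            add_tmul u u' f, map_add]
          exact Submodule.add_mem _ hu hu'
    · -- (ii)
      intro n S hsimp hiso x hx hsum i
      ext b
      obtain ⟨b', hb'⟩ := density S hsimp hiso (Pi.single i ((rho k B (S i).V) b))
      have hbi : ∀ v : (S i).V, b • v = b' • v := by
        intro v
        rw [hb' i v, Pi.single_eq_same]
        rfl
      have hbj : ∀ j, j ≠ i → ∀ v : (S j).V, b' • v = 0 := by
        intro j hj v
        rw [hb' j v, Pi.single_eq_of_ne hj]
        rfl
      obtain ⟨ti, hti⟩ := hx i
      have h1 : x i b = x i b' := by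
        rw [← hti]
        exact matrixCoeff_eq_of_smul_eq ti hbi
      have h2 : ∀ j, j ≠ i → x j b' = 0 := by
        intro j hj
        obtain ⟨tj, htj⟩ := hx j
        rw [← htj]
        exact matrixCoeff_eq_zero_of_smul_eq_zero tj (hbj j hj)
      have h3 : (∑ j, x j) b' = 0 := by rw [hsum]; rfl
      have h3' : ∑ j, x j b' = 0 := by
        rw [← h3, LinearMap.coe_sum, Finset.sum_apply]
      have h4 : ∑ j, x j b' = x i b' := Finset.sum_eq_single_of_mem i (Finset.mem_univ i)
        (fun j _ hj => h2 j hj)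
      show x i b = (0 : Module.Dual k B) b
      rw [h1, ← h4, h3']
      rfl
  · rintro ⟨h1, -⟩ V _ _ _ _ _
    classical
    let W₀ : FDMod k B := { V := V }
    have hr : LinearMap.range (matrixCoeff k B V) ≤
        ⨆ W : FDMod k B, ⨆ _ : IsSimpleModule B W.V, LinearMap.range (matrixCoeff k B W.V) := by
      rw [← h1]
      exact le_iSup (fun W : FDMod k B => LinearMap.range (matrixCoeff k B W.V)) W₀
    haveI hfd : FiniteDimensional k ↥(LinearMap.range (matrixCoeff k B V)) := inferInstance
    haveI := Module.Free.of_divisionRing k ↥(LinearMap.range (matrixCoeff k B V))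
    let bR := Module.finBasis k ↥(LinearMap.range (matrixCoeff k B V))
    choose sfun hsfun using
      fun t : Fin (Module.finrank k ↥(LinearMap.range (matrixCoeff k B V))) =>
        Submodule.mem_iSup_iff_exists_finset.mp (hr (bR t).2)
    let s0 : Finset (FDMod k B) := Finset.univ.biUnion sfun
    have hs0 : LinearMap.range (matrixCoeff k B V) ≤
        ⨆ W ∈ s0, ⨆ _ : IsSimpleModule B W.V, LinearMap.range (matrixCoeff k B W.V) := by
      intro x hx
      have hrep0 := bR.sum_repr ⟨x, hx⟩
      have hrep1 : x = ↑(∑ i, (bR.repr ⟨x, hx⟩) i • bR i) :=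
        (congrArg Subtype.val hrep0).symm
      rw [hrep1, AddSubmonoidClass.coe_finset_sum]
      refine Submodule.sum_mem _ fun t _ => ?_
      rw [SetLike.val_smul]
      refine Submodule.smul_mem _ _ ?_
      have hle : (⨆ W ∈ sfun t, ⨆ _ : IsSimpleModule B W.V,
            LinearMap.range (matrixCoeff k B W.V)) ≤
          ⨆ W ∈ s0, ⨆ _ : IsSimpleModule B W.V, LinearMap.range (matrixCoeff k B W.V) :=
        biSup_mono (fun W hW => Finset.mem_biUnion.mpr ⟨t, Finset.mem_univ t, hW⟩)
      exact hle (hsfun t)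
    let s1 : Finset (FDMod k B) := s0.filter (fun W => IsSimpleModule B W.V)
    have hs1 : LinearMap.range (matrixCoeff k B V) ≤
        ⨆ W ∈ s1, LinearMap.range (matrixCoeff k B W.V) := by
      refine hs0.trans ?_
      refine iSup_le fun W => iSup_le fun hW => iSup_le fun hsimp => ?_
      have hmem : W ∈ s1 := Finset.mem_filter.mpr ⟨hW, hsimp⟩
      have hle : LinearMap.range (matrixCoeff k B W.V) ≤
          ⨆ W ∈ s1, LinearMap.range (matrixCoeff k B W.V) :=
        le_biSup (fun W : FDMod k B => LinearMap.range (matrixCoeff k B W.V)) hmem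
      exact hle
    obtain ⟨t, hts, hcov, hpair⟩ := dedupe (fun W W' : FDMod k B => Nonempty (W.V ≃ₗ[B] W'.V))
      (fun W => ⟨LinearEquiv.refl B W.V⟩) (fun h => h.elim fun e => ⟨e.symm⟩)
      (fun h h' => h.elim fun e => h'.elim fun e' => ⟨e.trans e'⟩) s1
    let S : Fin t.card → FDMod k B := fun i => ↑(t.equivFin.symm i)
    have hSmem : ∀ i, (S i : FDMod k B) ∈ t := fun i => (t.equivFin.symm i).2
    have hSsimp : ∀ i, IsSimpleModule B (S i).V := fun i =>
      (Finset.mem_filter.mp (hts (hSmem i))).2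
    have hSsurj : ∀ W ∈ t, ∃ i, S i = W := fun W hW =>
      ⟨t.equivFin ⟨W, hW⟩, by simp [S]⟩
    have hSiso : ∀ i j, i ≠ j → IsEmpty ((S i).V ≃ₗ[B] (S j).V) := by
      intro i j hij
      rw [← not_nonempty_iff]
      refine hpair _ (hSmem i) _ (hSmem j) ?_
      intro hEq
      exact hij (t.equivFin.symm.injective (Subtype.ext hEq))
    set J : Submodule k B := ⨅ i : Fin t.card, LinearMap.ker (rho k B (S i).V) with hJdef
    have hJcov : ∀ W ∈ s1, ∀ b ∈ J, ∀ w : W.V, b • w = 0 := by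
      intro W hW b hb
      obtain ⟨W', hW', ⟨e⟩⟩ := hcov W hW
      obtain ⟨i, rfl⟩ := hSsurj W' hW'
      have hbi : ∀ v : (S i).V, b • v = 0 := by
        have h0 : rho k B (S i).V b = 0 := (Submodule.mem_iInf _).mp hb i
        intro v
        simpa using congrFun (congrArg DFunLike.coe h0) v
      exact smul_eq_zero_of_equiv e.symm b hbi
    have hker : J ≤ LinearMap.ker (rho k B V) := by
      intro b hb
      have hDD := Subspace.dualAnnihilator_dualCoannihilator_eq
        (W := LinearMap.ker (rho k B V))
      rw [← hDD, Submodule.mem_dualCoannihilator]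
      intro F hF
      have hFmem : F ∈ LinearMap.range (matrixCoeff k B V) := by
        apply mem_range_matrixCoeff_of_vanishes
        intro b0 hb0
        refine (Submodule.mem_dualAnnihilator _).mp hF b0 ?_
        rw [LinearMap.mem_ker]
        ext v
        simpa using hb0 v
      have hsup : (⨆ W ∈ s1, LinearMap.range (matrixCoeff k B W.V)) ≤ J.dualAnnihilator := by
        refine iSup_le fun W => iSup_le fun hW => ?_
        rintro _ ⟨u, rfl⟩
        rw [Submodule.mem_dualAnnihilator]
        intro b1 hb1
        exact matrixCoeff_eq_zero_of_smul_eq_zero u (hJcov W hW b1 hb1)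
      exact (Submodule.mem_dualAnnihilator _).mp (hsup (hs1 hFmem)) b hb
    -- build a surjection from a semisimple module onto V
    haveI hss : ∀ i, IsSemisimpleModule B (S i).V := fun i => by
      haveI := hSsimp i; infer_instance
    let d : Fin t.card → ℕ := fun i => Module.finrank k (S i).V
    let P' : Type u := ∀ i, (Fin (d i) → (S i).V)
    haveI : ∀ i, IsSemisimpleModule B (Fin (d i) → (S i).V) :=
      fun i => piSemisimple (fun _ : Fin (d i) => (S i).V)
    haveI : IsSemisimpleModule B P' := piSemisimple (fun i => Fin (d i) → (S i).V)
    let bS : ∀ i, Module.Basis (Fin (d i)) k (S i).V := fun i => Module.finBasis k (S i).V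
    let ι₀ : P' := fun i l => bS i l
    have horb : ∀ p : P', ∃ b : B, b • ι₀ = p := by
      intro p
      obtain ⟨b, hb⟩ := density S hSsimp hSiso (fun i => (bS i).constr k (fun l => p i l))
      refine ⟨b, ?_⟩
      funext i l
      show b • (bS i l) = p i l
      rw [hb i (bS i l), Module.Basis.constr_basis]
    have hkill : ∀ b : B, b • ι₀ = 0 → ∀ v : V, b • v = 0 := by
      intro b hb
      have hbJ : b ∈ J := by
        rw [hJdef, Submodule.mem_iInf]
        intro i
        rw [LinearMap.mem_ker]
        refine (bS i).ext fun l => ?_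
        show b • (bS i l) = 0
        exact congrFun (congrFun hb i) l
      have hbker := hker hbJ
      intro v
      have h0 : rho k B V b = 0 := LinearMap.mem_ker.mp hbker
      simpa using congrFun (congrArg DFunLike.coe h0) v
    let bV : Module.Basis (Fin (Module.finrank k V)) k V := Module.finBasis k V
    have hchi : ∀ a : Fin (Module.finrank k V),
        ∃ χ : P' →ₗ[B] V, ∀ b : B, χ (b • ι₀) = b • bV a := by
      intro a
      let θ : B →ₗ[B] (P' × V) := LinearMap.toSpanSingleton B _ (ι₀, bV a)
      let Nr := LinearMap.range θ
      let pr1 : Nr →ₗ[B] P' := (LinearMap.fst B P' V) ∘ₗ Nr.subtype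
      have hθ : ∀ b : B, θ b = (b • ι₀, b • bV a) := fun b => rfl
      have hbij : Function.Bijective pr1 := by
        constructor
        · rintro ⟨x, hx⟩ ⟨y, hy⟩ hxy
          obtain ⟨bx, rfl⟩ := hx
          obtain ⟨by', rfl⟩ := hy
          have hx1 : bx • ι₀ = by' • ι₀ := hxy
          have hx2 : (bx - by') • ι₀ = 0 := by rw [sub_smul, hx1, sub_self]
          have hx3 : (bx - by') • (bV a : V) = 0 := hkill _ hx2 (bV a)
          have hx4 : bx • (bV a : V) = by' • (bV a : V) := by
            rwa [sub_smul, sub_eq_zero] at hx3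
          refine Subtype.ext ?_
          show θ bx = θ by'
          rw [hθ, hθ, hx1, hx4]
        · intro p
          obtain ⟨b, hb⟩ := horb p
          exact ⟨⟨θ b, LinearMap.mem_range_self θ b⟩, hb⟩
      let eqv := LinearEquiv.ofBijective pr1 hbij
      refine ⟨(LinearMap.snd B P' V) ∘ₗ (Nr.subtype ∘ₗ (eqv.symm : P' →ₗ[B] Nr)), fun b => ?_⟩
      have h5 : eqv.symm (b • ι₀) = ⟨θ b, LinearMap.mem_range_self θ b⟩ := by
        apply eqv.injective
        rw [LinearEquiv.apply_symm_apply]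
        rfl
      show (LinearMap.snd B P' V) ((Nr.subtype) ((eqv.symm : P' →ₗ[B] Nr) (b • ι₀))) = b • bV a
      have h6 : (eqv.symm : P' →ₗ[B] Nr) (b • ι₀) = ⟨θ b, LinearMap.mem_range_self θ b⟩ := h5
      rw [h6]
      rfl
    choose χ hχ using hchi
    let Ψ : (Fin (Module.finrank k V) → P') →ₗ[B] V :=
      ∑ a, (χ a) ∘ₗ (LinearMap.proj a)
    have hrange : ∀ a, (bV a : V) ∈ LinearMap.range Ψ := by
      intro a
      refine ⟨Pi.single a ι₀, ?_⟩
      have hsum1 : Ψ (Pi.single a ι₀)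
          = ∑ a', χ a' ((Pi.single a ι₀ : Fin (Module.finrank k V) → P') a') := by
        rw [show Ψ (Pi.single a ι₀)
            = (∑ a', (χ a') ∘ₗ (LinearMap.proj a')) (Pi.single a ι₀) from rfl,
          LinearMap.sum_apply]
        rfl
      rw [hsum1, Finset.sum_eq_single_of_mem a (Finset.mem_univ a)
        (fun a' _ ha' => by rw [Pi.single_eq_of_ne ha', map_zero])]
      rw [Pi.single_eq_same]
      have := hχ a 1
      rwa [one_smul, one_smul] at this
    haveI : IsSemisimpleModule B (Fin (Module.finrank k V) → P') :=
      piSemisimple (fun _ => P')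
    have hsurj : Function.Surjective Ψ := by
      intro v
      have hv : v ∈ LinearMap.range Ψ := by
        have hrep : v = ∑ l, bV.repr v l • bV l := (bV.sum_repr v).symm
        rw [hrep]
        refine Submodule.sum_mem _ fun l _ => ?_
        have := Submodule.smul_mem (LinearMap.range Ψ) (algebraMap k B (bV.repr v l)) (hrange l)
        rwa [algebraMap_smul] at this
      exact hv
    set_option maxHeartbeats 1000000 in
    exact IsSemisimpleModule.congr (LinearMap.quotKerEquivOfSurjective Ψ hsurj).symm
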